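/- Every graph G with n vertices, m edges, and maximum degree at least 6 has a subset I ⊆ V(G) with |I| ≥ (54/59)·n - (9/59)·m - 35/59 such that the induced subgraph G[I] has maximum degree at most 4. -/

import Mathlib

open SimpleGraph

/-- `H` is a minor of `G`: disjoint connected branch sets witnessing every edge of `H`. -/
def IsMinorOf {β α : Type} (H : SimpleGraph β) (G : SimpleGraph α) : Prop :=
  ∃ f : β → Set α,
    (∀ b, (f b).Nonempty) ∧
    (∀ b, (G.induce (f b)).Connected) ∧
    (Pairwise fun b₁ b₂ => Disjoint (f b₁) (f b₂)) ∧
    ∀ ⦃b₁ b₂⦄, H.Adj b₁ b₂ → ∃ u ∈ f b₁, ∃ v ∈ f b₂, G.Adj u v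

/-- A graph is planar iff it has neither a `K₅` nor a `K₃,₃` minor (Wagner's theorem). -/
def IsPlanar {α : Type} (G : SimpleGraph α) : Prop :=
  ¬ IsMinorOf (completeGraph (Fin 5)) G ∧
  ¬ IsMinorOf (completeBipartiteGraph (Fin 3) (Fin 3)) G

/-- A graph is outerplanar iff it has neither a `K₄` nor a `K₂,₃` minor. -/
def IsOuterplanar {α : Type} (G : SimpleGraph α) : Prop :=
  ¬ IsMinorOf (completeGraph (Fin 4)) G ∧
  ¬ IsMinorOf (completeBipartiteGraph (Fin 2) (Fin 3)) G

/-- An outerpath is (isomorphic to) a spanning subgraph of the square of a path: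
there is a linear ordering of the vertices in which every edge joins vertices
at distance at most `2`. -/
def IsOuterpath {α : Type} [Fintype α] (G : SimpleGraph α) : Prop :=
  ∃ σ : α ≃ Fin (Fintype.card α),
    ∀ u v, G.Adj u v → (σ u).val ≤ (σ v).val + 2 ∧ (σ v).val ≤ (σ u).val + 2

/-- Arc of the outer cycle `0,1,…,n-1` from `a` to `b` (inclusive): the vertex set of
one of the two `ab`-split subgraphs of a maximal outerplanar graph whose
outerplane embedding has the canonical outer cycle on `ZMod n`. -/
def arc (n : ℕ) [NeZero n] (a b : ZMod n) : Set (ZMod n) := {w | (w - a).val ≤ (b - a).val}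

namespace Stmt13Aux

variable {V : Type} [Fintype V] [DecidableEq V] (G : SimpleGraph V) [DecidableRel G.Adj]

/-- Twice the number of edges inside `A`: the number of ordered adjacent pairs in `A`. -/
def deg2 (A : Finset V) : ℕ := ∑ u ∈ A, ∑ w ∈ A, if G.Adj u w then 1 else 0

lemma deg2_erase (A : Finset V) (v : V) (hv : v ∈ A) :
    deg2 G A = deg2 G (A.erase v) + 2 * (G.neighborFinset v ∩ A).card := by
  classical
  set A' := A.erase v with hA'
  have hvA' : v ∉ A' := Finset.notMem_erase v A
  have hins : insert v A' = A := Finset.insert_erase hv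
  have hSv : (G.neighborFinset v ∩ A).card = ∑ w ∈ A', (if G.Adj v w then 1 else 0) := by
    rw [← Finset.card_filter]
    congr 1
    ext w
    simp only [Finset.mem_inter, mem_neighborFinset, Finset.mem_filter, hA', Finset.mem_erase]
    constructor
    · rintro ⟨hadj, hw⟩; exact ⟨⟨hadj.ne', hw⟩, hadj⟩
    · rintro ⟨⟨-, hw⟩, hadj⟩; exact ⟨hadj, hw⟩
  have hexp : deg2 G A = (∑ w ∈ A', if G.Adj v w then 1 else 0)
      + ((∑ u ∈ A', if G.Adj u v then 1 else 0) + deg2 G A') := by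
    unfold deg2
    rw [← hins, Finset.sum_insert hvA', Finset.sum_insert hvA']
    have h0 : (if G.Adj v v then (1:ℕ) else 0) = 0 := by simp
    have hinner : ∀ u ∈ A', (∑ w ∈ insert v A', if G.Adj u w then (1:ℕ) else 0)
        = (if G.Adj u v then 1 else 0) + ∑ w ∈ A', (if G.Adj u w then 1 else 0) :=
      fun u _ => Finset.sum_insert hvA'
    rw [Finset.sum_congr rfl hinner, Finset.sum_add_distrib, h0]
    ring
  have hsymm : (∑ u ∈ A', if G.Adj u v then (1:ℕ) else 0)
      = ∑ w ∈ A', (if G.Adj v w then 1 else 0) :=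
    Finset.sum_congr rfl fun u _ => if_congr (G.adj_comm u v) rfl rfl
  rw [hexp, hsymm, hSv]
  ring

lemma greedy_aux (k : ℕ) : ∀ A : Finset V, A.card ≤ k →
    ∃ I : Finset V, I ⊆ A ∧ (∀ v ∈ I, (G.neighborFinset v ∩ I).card ≤ 4) ∧
      10 * A.card ≤ 10 * I.card + deg2 G A := by
  induction k with
  | zero =>
    intro A hA
    have : A = ∅ := Finset.card_eq_zero.mp (Nat.le_zero.mp hA)
    subst this
    exact ⟨∅, Finset.Subset.refl _, by simp, by simp⟩
  | succ k ih =>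
    intro A hA
    by_cases hgood : ∀ v ∈ A, (G.neighborFinset v ∩ A).card ≤ 4
    · exact ⟨A, Finset.Subset.refl A, hgood, by omega⟩
    · push_neg at hgood
      obtain ⟨v, hv, h5⟩ := hgood
      have hpos : 0 < A.card := Finset.card_pos.mpr ⟨v, hv⟩
      have hce := Finset.card_erase_of_mem hv
      obtain ⟨I, h1, h2, h3⟩ := ih (A.erase v) (by omega)
      refine ⟨I, h1.trans (Finset.erase_subset _ _), h2, ?_⟩
      have hd := deg2_erase G A v hv
      omega

lemma greedy (A : Finset V) :
    ∃ I : Finset V, I ⊆ A ∧ (∀ v ∈ I, (G.neighborFinset v ∩ I).card ≤ 4) ∧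
      10 * A.card ≤ 10 * I.card + deg2 G A :=
  greedy_aux G A.card A le_rfl

lemma strip_aux (k : ℕ) : ∀ A : Finset V, A.card ≤ k →
    ∃ B : Finset V, B ⊆ A ∧ (∀ v ∈ B, (G.neighborFinset v ∩ B).card ≤ 5) ∧
      108 * A.card + 9 * deg2 G B ≤ 108 * B.card + 9 * deg2 G A := by
  induction k with
  | zero =>
    intro A hA
    have : A = ∅ := Finset.card_eq_zero.mp (Nat.le_zero.mp hA)
    subst this
    exact ⟨∅, Finset.Subset.refl _, by simp, by simp⟩
  | succ k ih =>
    intro A hA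
    by_cases hgood : ∀ v ∈ A, (G.neighborFinset v ∩ A).card ≤ 5
    · exact ⟨A, Finset.Subset.refl A, hgood, by omega⟩
    · push_neg at hgood
      obtain ⟨v, hv, h6⟩ := hgood
      have hpos : 0 < A.card := Finset.card_pos.mpr ⟨v, hv⟩
      have hce := Finset.card_erase_of_mem hv
      obtain ⟨B, h1, h2, h3⟩ := ih (A.erase v) (by omega)
      refine ⟨B, h1.trans (Finset.erase_subset _ _), h2, ?_⟩
      have hd := deg2_erase G A v hv
      omega

lemma strip (A : Finset V) :
    ∃ B : Finset V, B ⊆ A ∧ (∀ v ∈ B, (G.neighborFinset v ∩ B).card ≤ 5) ∧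
      108 * A.card + 9 * deg2 G B ≤ 108 * B.card + 9 * deg2 G A :=
  strip_aux G A.card A le_rfl

/-! ### The 5-regularization and the domination lemma -/

/-- Flip the `k`-th bit. -/
def flip (k : Fin 5) (f : Fin 5 → Bool) : Fin 5 → Bool := Function.update f k (!(f k))

lemma flip_apply_self (k : Fin 5) (f : Fin 5 → Bool) : flip k f k = !(f k) :=
  Function.update_self k _ f

lemma flip_apply_ne {j k : Fin 5} (h : j ≠ k) (f : Fin 5 → Bool) : flip k f j = f j :=
  Function.update_of_ne h _ f

lemma flip_flip (k : Fin 5) (f : Fin 5 → Bool) : flip k (flip k f) = f := by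
  funext j
  by_cases h : j = k
  · subst h
    rw [flip_apply_self, flip_apply_self, Bool.not_not]
  · rw [flip_apply_ne h, flip_apply_ne h]

lemma flip_ne (k : Fin 5) (f : Fin 5 → Bool) : flip k f ≠ f := by
  intro h
  have := congrFun h k
  rw [flip_apply_self] at this
  simp at this

lemma card_filter_fin5 (d : ℕ) (hd : d ≤ 5) :
    (Finset.filter (fun k : Fin 5 => (k : ℕ) < d) Finset.univ).card = d := by
  interval_cases d <;> decide

lemma flip_inj (f : Fin 5 → Bool) : Function.Injective (fun k => flip k f) := by
  intro k k' he
  by_contra hne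
  have h1 := congrFun he k
  simp only at h1
  rw [flip_apply_self, flip_apply_ne (fun h => hne h)] at h1
  simp at h1

/-- Degree inside `A`, for a vertex of `A`. -/
def degA (A : Finset V) (v : ↥A) : ℕ := (G.neighborFinset (v : V) ∩ A).card

/-- Deficiency: how far the inner degree is from `5`. -/
def defA (A : Finset V) (v : ↥A) : ℕ := 5 - degA G A v

/-- The 5-regularization of the subgraph induced on `A` (assuming inner degrees ≤ 5):
32 copies of `A`, indexed by 5 bits; inside a copy we keep the induced adjacency, and a
vertex of deficiency `d` is moreover joined to its images under flipping any of the
first `d` bits. -/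
def HH (A : Finset V) : SimpleGraph (↥A × (Fin 5 → Bool)) where
  Adj p q := (G.Adj p.1 q.1 ∧ p.2 = q.2) ∨
    (p.1 = q.1 ∧ ∃ k : Fin 5, (k : ℕ) < defA G A p.1 ∧ q.2 = flip k p.2)
  symm := by
    constructor
    rintro ⟨a, f⟩ ⟨b, g⟩ (⟨h1, h2⟩ | ⟨h1, k, hk, hg⟩)
    · exact Or.inl ⟨h1.symm, h2.symm⟩
    · refine Or.inr ⟨h1.symm, k, ?_, ?_⟩
      · exact h1 ▸ hk
      · rw [hg, flip_flip]
  loopless := by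
    constructor
    rintro ⟨a, f⟩ (⟨h, -⟩ | ⟨-, k, -, hg⟩)
    · exact G.loopless.irrefl a h
    · exact flip_ne k f hg.symm

lemma HH_adj (A : Finset V) (p q : ↥A × (Fin 5 → Bool)) :
    (HH G A).Adj p q ↔ (G.Adj p.1 q.1 ∧ p.2 = q.2) ∨
      (p.1 = q.1 ∧ ∃ k : Fin 5, (k : ℕ) < defA G A p.1 ∧ q.2 = flip k p.2) := Iff.rfl

lemma HH_degree (A : Finset V) (hA : ∀ v ∈ A, (G.neighborFinset v ∩ A).card ≤ 5)
    (p : ↥A × (Fin 5 → Bool)) : ((HH G A).neighborSet p).ncard = 5 := by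
  classical
  obtain ⟨v, f⟩ := p
  have hdeg : degA G A v ≤ 5 := hA (v : V) v.2
  set F₁ : Finset (↥A × (Fin 5 → Bool)) :=
    (Finset.univ.filter fun w : ↥A => G.Adj (v : V) (w : V)) ×ˢ {f} with hF₁
  set F₂ : Finset (↥A × (Fin 5 → Bool)) :=
    {v} ×ˢ ((Finset.univ.filter fun k : Fin 5 => (k : ℕ) < defA G A v).image fun k => flip k f)
    with hF₂
  have hset : (HH G A).neighborSet (v, f) = ↑(F₁ ∪ F₂) := by
    ext ⟨w, g⟩
    simp only [mem_neighborSet, Finset.coe_union, Set.mem_union, Finset.mem_coe]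
    constructor
    · intro hq
      rcases (HH_adj G A (v, f) (w, g)).mp hq with ⟨h1, h2⟩ | ⟨h1, k, hk, hg⟩
      · exact Or.inl (Finset.mem_product.mpr
          ⟨Finset.mem_filter.mpr ⟨Finset.mem_univ _, h1⟩, by simpa using h2.symm⟩)
      · exact Or.inr (Finset.mem_product.mpr
          ⟨by simpa using h1.symm,
           Finset.mem_image.mpr ⟨k, Finset.mem_filter.mpr ⟨Finset.mem_univ _, hk⟩, hg.symm⟩⟩)
    · intro hq
      apply (HH_adj G A (v, f) (w, g)).mpr
      rcases hq with h | h
      · obtain ⟨h1, h2⟩ := Finset.mem_product.mp h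
        exact Or.inl ⟨(Finset.mem_filter.mp h1).2, by simpa using (Finset.mem_singleton.mp h2).symm⟩
      · obtain ⟨h1, h2⟩ := Finset.mem_product.mp h
        obtain ⟨k, hk, hgk⟩ := Finset.mem_image.mp h2
        exact Or.inr ⟨(Finset.mem_singleton.mp h1).symm, k, (Finset.mem_filter.mp hk).2, hgk.symm⟩
  have hdisj : Disjoint F₁ F₂ := by
    rw [Finset.disjoint_left]
    rintro ⟨w, g⟩ h1 h2
    obtain ⟨ha, -⟩ := Finset.mem_product.mp h1
    obtain ⟨hb, -⟩ := Finset.mem_product.mp h2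
    have hwv : w = v := Finset.mem_singleton.mp hb
    have hadj : G.Adj (v : V) (w : V) := (Finset.mem_filter.mp ha).2
    rw [hwv] at hadj
    exact G.loopless.irrefl _ hadj
  have hc1 : F₁.card = degA G A v := by
    rw [hF₁, Finset.card_product, Finset.card_singleton, mul_one]
    have himg : (Finset.univ.filter fun w : ↥A => G.Adj (v : V) (w : V)).image
        (fun w : ↥A => (w : V)) = G.neighborFinset (v : V) ∩ A := by
      ext x
      simp only [Finset.mem_image, Finset.mem_filter, Finset.mem_univ, true_and,
        Finset.mem_inter, mem_neighborFinset]
      constructor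
      · rintro ⟨w, hw, rfl⟩; exact ⟨hw, w.2⟩
      · rintro ⟨hadj, hx⟩; exact ⟨⟨x, hx⟩, hadj, rfl⟩
    have hinj := Finset.card_image_of_injective
      (Finset.univ.filter fun w : ↥A => G.Adj (v : V) (w : V)) (Subtype.coe_injective)
    unfold degA
    rw [← himg, hinj]
  have hc2 : F₂.card = defA G A v := by
    rw [hF₂, Finset.card_product, Finset.card_singleton, one_mul,
      Finset.card_image_of_injective _ (flip_inj f),
      card_filter_fin5 (defA G A v) (by unfold defA; omega)]
  rw [hset, Set.ncard_coe_finset, Finset.card_union_of_disjoint hdisj, hc1, hc2]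
  unfold defA
  omega

lemma exists_dom (A : Finset V)
    (hA : ∀ v ∈ A, (G.neighborFinset v ∩ A).card ≤ 5)
    (hdom5 : ∀ (h : ℕ) (H : SimpleGraph (Fin h)),
      (∀ v, (H.neighborSet v).ncard = 5) →
      ∃ D : Set (Fin h), (∀ v, v ∈ D ∨ ∃ u ∈ D, H.Adj u v) ∧
        (D.ncard : ℝ) ≤ 5 * h / 14) :
    ∃ D : Finset V, D ⊆ A ∧ 14 * D.card ≤ 5 * A.card ∧
      ∀ v ∈ A, (G.neighborFinset v ∩ A).card = 5 → v ∈ D ∨ ∃ u ∈ D, G.Adj u v := by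
  classical
  set n := Fintype.card (↥A × (Fin 5 → Bool)) with hn
  set e := Fintype.equivFin (↥A × (Fin 5 → Bool)) with he
  set H' : SimpleGraph (Fin n) := SimpleGraph.comap e.symm (HH G A) with hH'
  have hreg : ∀ i, (H'.neighborSet i).ncard = 5 := by
    intro i
    have himg : H'.neighborSet i = ⇑e '' ((HH G A).neighborSet (e.symm i)) := by
      rw [Equiv.image_eq_preimage_symm]
      ext j
      simp only [mem_neighborSet, Set.mem_preimage, hH', SimpleGraph.comap_adj]
    rw [himg, Set.ncard_image_of_injective _ e.injective]
    exact HH_degree G A hA (e.symm i)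
  obtain ⟨D, hdomD, hcardD⟩ := hdom5 n H' hreg
  set DW : Finset (↥A × (Fin 5 → Bool)) := D.toFinset.image e.symm with hDW
  have hDWcard : DW.card = D.ncard := by
    rw [hDW, Finset.card_image_of_injective _ e.symm.injective, Set.ncard_eq_toFinset_card']
  have hdomW : ∀ p, p ∈ DW ∨ ∃ q ∈ DW, (HH G A).Adj q p := by
    intro p
    rcases hdomD (e p) with h | ⟨u, hu, hadj⟩
    · left
      exact Finset.mem_image.mpr ⟨e p, Set.mem_toFinset.mpr h, by simp⟩
    · right
      refine ⟨e.symm u, Finset.mem_image.mpr ⟨u, Set.mem_toFinset.mpr hu, rfl⟩, ?_⟩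
      have : (HH G A).Adj (e.symm u) (e.symm (e p)) := hadj
      simpa using this
  have hsum : ∑ f : Fin 5 → Bool, (DW.filter fun p => p.2 = f).card = DW.card :=
    (Finset.card_eq_sum_card_fiberwise (fun p _ => Finset.mem_univ p.2)).symm
  have hcard32 : Fintype.card (Fin 5 → Bool) = 32 := by simp
  have hex : ∃ f₀ : Fin 5 → Bool, 32 * (DW.filter fun p => p.2 = f₀).card ≤ DW.card := by
    by_contra hc
    push_neg at hc
    have h2 : ∑ f : Fin 5 → Bool, (DW.card + 1) ≤
        ∑ f : Fin 5 → Bool, 32 * (DW.filter fun p => p.2 = f).card :=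
      Finset.sum_le_sum fun f _ => hc f
    rw [Finset.sum_const, ← Finset.mul_sum, hsum, Finset.card_univ, hcard32,
      smul_eq_mul] at h2
    omega
  obtain ⟨f₀, hf₀⟩ := hex
  refine ⟨(DW.filter fun p => p.2 = f₀).image fun p => (p.1 : V), ?_, ?_, ?_⟩
  · intro x hx
    obtain ⟨p, -, rfl⟩ := Finset.mem_image.mp hx
    exact p.1.2
  · have hcardW : n = A.card * 32 := by
      rw [hn, Fintype.card_prod, Fintype.card_coe, hcard32]
    have himgle : ((DW.filter fun p => p.2 = f₀).image fun p => (p.1 : V)).card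
        ≤ (DW.filter fun p => p.2 = f₀).card := Finset.card_image_le
    have hr : (14 : ℝ) * (((DW.filter fun p => p.2 = f₀).image fun p => (p.1 : V)).card : ℝ)
        ≤ 5 * (A.card : ℝ) := by
      have h1 : (32 : ℝ) * ((DW.filter fun p => p.2 = f₀).card : ℝ) ≤ (D.ncard : ℝ) := by
        rw [← hDWcard]
        exact_mod_cast hf₀
      have h2 : (D.ncard : ℝ) ≤ 5 * ((A.card : ℝ) * 32) / 14 := by
        have hncast : (n : ℝ) = (A.card : ℝ) * 32 := by exact_mod_cast hcardW
        have := hcardD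
        rw [hncast] at this
        exact this
      have h3 : (((DW.filter fun p => p.2 = f₀).image fun p => (p.1 : V)).card : ℝ)
          ≤ ((DW.filter fun p => p.2 = f₀).card : ℝ) := by exact_mod_cast himgle
      linarith
    exact_mod_cast hr
  · intro v hvA hv5
    have hdeg5 : degA G A ⟨v, hvA⟩ = 5 := hv5
    have hdef0 : defA G A ⟨v, hvA⟩ = 0 := by unfold defA; omega
    rcases hdomW (⟨v, hvA⟩, f₀) with hmem | ⟨⟨u, g⟩, huDW, hadj⟩
    · left
      exact Finset.mem_image.mpr ⟨(⟨v, hvA⟩, f₀), Finset.mem_filter.mpr ⟨hmem, rfl⟩, rfl⟩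
    · rcases (HH_adj G A (u, g) (⟨v, hvA⟩, f₀)).mp hadj with ⟨h1, h2⟩ | ⟨h1, k, hk, -⟩
      · right
        exact ⟨(u : V), Finset.mem_image.mpr ⟨(u, g), Finset.mem_filter.mpr ⟨huDW, h2⟩, rfl⟩, h1⟩
      · exfalso
        rw [h1, hdef0] at hk
        exact Nat.not_lt_zero _ hk

end Stmt13Aux

/-- Every graph with `n` vertices, `m` edges and maximum degree at least `6` has a
vertex subset `I` with `|I| ≥ (54/59)·n - (9/59)·m - 35/59` inducing a subgraph of
maximum degree at most `4` (given the dominating-set bound for `5`-regular graphs). -/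
theorem stmt13 {V : Type} [Fintype V] (G : SimpleGraph V)
    (hdeg : ∃ v, 6 ≤ (G.neighborSet v).ncard)
    (hdom5 : ∀ (h : ℕ) (H : SimpleGraph (Fin h)),
      (∀ v, (H.neighborSet v).ncard = 5) →
      ∃ D : Set (Fin h), (∀ v, v ∈ D ∨ ∃ u ∈ D, H.Adj u v) ∧
        (D.ncard : ℝ) ≤ 5 * h / 14) :
    ∃ I : Set V,
      ((54 : ℝ) / 59) * (Fintype.card V : ℝ) - (9 / 59) * (G.edgeSet.ncard : ℝ) - 35 / 59
        ≤ (I.ncard : ℝ) ∧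
      ∀ v ∈ I, ((G.neighborSet v) ∩ I).ncard ≤ 4 := by
  classical
  obtain ⟨B, hBsub, hB5, hBstrip⟩ := Stmt13Aux.strip G (Finset.univ : Finset V)
  set nn := Fintype.card V with hnn
  set m := G.edgeSet.ncard with hm
  have hdeg2univ : Stmt13Aux.deg2 G Finset.univ = 2 * m := by
    have h1 : Stmt13Aux.deg2 G Finset.univ = ∑ v : V, G.degree v := by
      unfold Stmt13Aux.deg2
      apply Finset.sum_congr rfl
      intro u _
      rw [← Finset.card_filter]
      rw [SimpleGraph.degree, SimpleGraph.neighborFinset_eq_filter]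
    have h2 : m = G.edgeFinset.card := by
      rw [hm, ← SimpleGraph.coe_edgeFinset, Set.ncard_coe_finset]
    rw [h1, h2, SimpleGraph.sum_degrees_eq_twice_card_edges]
  have huniv : (Finset.univ : Finset V).card = nn := Finset.card_univ
  set b := B.card with hb
  set dB := Stmt13Aux.deg2 G B with hdB
  have hstrip : 108 * nn + 9 * dB ≤ 108 * b + 9 * (2 * m) := by
    rw [← huniv, ← hdeg2univ]
    exact hBstrip
  -- helper to convert a Finset answer into the required Set answer
  have finish : ∀ IF : Finset V, (∀ v ∈ IF, (G.neighborFinset v ∩ IF).card ≤ 4) →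
      756 * nn ≤ 826 * IF.card + 126 * m + 490 →
      ∃ I : Set V,
        ((54 : ℝ) / 59) * (nn : ℝ) - (9 / 59) * (m : ℝ) - 35 / 59 ≤ (I.ncard : ℝ) ∧
        ∀ v ∈ I, ((G.neighborSet v) ∩ I).ncard ≤ 4 := by
    intro IF hcond hbound
    refine ⟨↑IF, ?_, ?_⟩
    · rw [Set.ncard_coe_finset]
      have : (756 * nn : ℝ) ≤ 826 * IF.card + 126 * m + 490 := by exact_mod_cast hbound
      linarith
    · intro v hv
      have hv' : v ∈ IF := hv
      have hseteq : (G.neighborSet v) ∩ ↑IF = ↑(G.neighborFinset v ∩ IF) := by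
        ext x
        simp [SimpleGraph.mem_neighborFinset, SimpleGraph.mem_neighborSet]
      rw [hseteq, Set.ncard_coe_finset]
      exact hcond v hv'
  by_cases hcase : 225 * b ≤ 63 * dB + 490
  · -- dense regime: use domination
    obtain ⟨D, hDsub, hDcard, hDdom⟩ := Stmt13Aux.exists_dom G B hB5 hdom5
    have hDb : D.card ≤ b := Finset.card_le_card hDsub
    have hIc : (B \ D).card = b - D.card := by rw [Finset.card_sdiff_of_subset hDsub]
    apply finish (B \ D)
    · intro v hv
      obtain ⟨hvB, hvD⟩ := Finset.mem_sdiff.mp hv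
      by_cases hc5 : (G.neighborFinset v ∩ B).card = 5
      · rcases hDdom v hvB hc5 with h | ⟨u, huD, hadj⟩
        · exact absurd h hvD
        · have hsub : G.neighborFinset v ∩ (B \ D) ⊆ (G.neighborFinset v ∩ B).erase u := by
            intro x hx
            obtain ⟨hx1, hx2⟩ := Finset.mem_inter.mp hx
            obtain ⟨hxB, hxD⟩ := Finset.mem_sdiff.mp hx2
            refine Finset.mem_erase.mpr ⟨?_, Finset.mem_inter.mpr ⟨hx1, hxB⟩⟩
            intro hxu
            exact hxD (hxu ▸ huD)
          have huin : u ∈ G.neighborFinset v ∩ B :=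
            Finset.mem_inter.mpr ⟨(SimpleGraph.mem_neighborFinset _ _ _).mpr hadj.symm,
              hDsub huD⟩
          calc (G.neighborFinset v ∩ (B \ D)).card
              ≤ ((G.neighborFinset v ∩ B).erase u).card := Finset.card_le_card hsub
            _ = (G.neighborFinset v ∩ B).card - 1 := Finset.card_erase_of_mem huin
            _ ≤ 4 := by omega
      · have hle5 : (G.neighborFinset v ∩ B).card ≤ 5 := hB5 v hvB
        have hsub : G.neighborFinset v ∩ (B \ D) ⊆ G.neighborFinset v ∩ B :=
          Finset.inter_subset_inter (Finset.Subset.refl _) (Finset.sdiff_subset)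
        have := Finset.card_le_card hsub
        omega
    · omega
  · -- sparse regime: greedy
    obtain ⟨I, hIsub, hIcond, hIcard⟩ := Stmt13Aux.greedy G B
    apply finish I hIcond
    omega
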